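/- Let k be a commutative ring and X(⋆) ∈ DF(k) a filtered object. If τ^B_{≥n} X → X denotes the n-connective cover in the Beilinson t-structure on DF(k), then for every i there is a natural equivalence gr^i(τ^B_{≥n} X) ≃ τ_{≥ n-i}(gr^i X), where τ_{≥ n-i} is the usual connective cover in D(k). -/

import Mathlib

open CategoryTheory Limits Opposite Pretriangulated

variable (k : Type*) [CommRing k] [HasDerivedCategory (ModuleCat k)]

namespace Stmt11Aux

variable {k}

lemma isZero_congr {Z : DerivedCategory (ModuleCat k)} {a b : ℤ} (h : a = b)
    (hz : IsZero ((DerivedCategory.homologyFunctor (ModuleCat k) a).obj Z)) :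
    IsZero ((DerivedCategory.homologyFunctor (ModuleCat k) b).obj Z) := h ▸ hz

lemma mono_aux (T : Triangle (DerivedCategory (ModuleCat k))) (hT : T ∈ distTriang _)
    (q : ℤ) (hz : IsZero ((DerivedCategory.homologyFunctor (ModuleCat k) (q - 1)).obj T.obj₃)) :
    Mono ((DerivedCategory.homologyFunctor (ModuleCat k) q).map T.mor₁) := by
  rw [DerivedCategory.HomologySequence.mono_homologyMap_mor₁_iff T hT (q - 1) q (by omega)]
  exact hz.eq_of_src _ _

lemma epi_aux (T : Triangle (DerivedCategory (ModuleCat k))) (hT : T ∈ distTriang _)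
    (q : ℤ) (hz : IsZero ((DerivedCategory.homologyFunctor (ModuleCat k) q).obj T.obj₃)) :
    Epi ((DerivedCategory.homologyFunctor (ModuleCat k) q).map T.mor₁) := by
  rw [DerivedCategory.HomologySequence.epi_homologyMap_mor₁_iff T hT q]
  exact hz.eq_of_tgt _ _

lemma δ_natural {T T' : Triangle (DerivedCategory (ModuleCat k))} (φ : T ⟶ T')
    (n₀ n₁ : ℤ) (h : n₀ + 1 = n₁) :
    (DerivedCategory.homologyFunctor (ModuleCat k) n₀).map φ.hom₃ ≫
        DerivedCategory.HomologySequence.δ T' n₀ n₁ h =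
      DerivedCategory.HomologySequence.δ T n₀ n₁ h ≫
        (DerivedCategory.homologyFunctor (ModuleCat k) n₁).map φ.hom₁ :=
  (DerivedCategory.homologyFunctor (ModuleCat k) 0).homologySequenceδ_naturality T T' φ n₀ n₁ h

end Stmt11Aux

/-- if `f : Y → X` exhibits `Y` as the `n`-connective cover `τ^B_{≥n} X`
in the Beilinson t-structure on `DF(k) = Fun(ℤᵒᵖ, D(k))` — i.e. the graded pieces of `Y`
satisfy `gr^i Y ∈ D(k)_{≥ n-i}` and the componentwise cofiber `Q` of `f` satisfies
`Q(i) ∈ D(k)_{≤ n-1-i}` — then for every `i` the induced map on graded pieces exhibits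
`gr^i Y` as the connective cover `τ_{≥ n-i}(gr^i X)`: `gr^i Y` is `(n-i)`-connective and
some (compatible) map `e : gr^i Y → gr^i X` is an isomorphism on `H_j` for `j ≥ n-i`
(homologically, `H_j = H^{-j}`). -/
theorem stmt11 (n : ℤ) (X Y Q : ℤᵒᵖ ⥤ DerivedCategory (ModuleCat k))
    (f : Y ⟶ X) (g : X ⟶ Q)
    (htri : ∀ i : ℤ, ∃ h : Q.obj (op i) ⟶ (Y.obj (op i))⟦(1 : ℤ)⟧,
      (Triangle.mk (f.app (op i)) (g.app (op i)) h ∈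
        distTriang (DerivedCategory (ModuleCat k))))
    (hYconn : ∀ (i : ℤ) (G : DerivedCategory (ModuleCat k))
      (gY : Y.obj (op i) ⟶ G) (hY : G ⟶ (Y.obj (op (i + 1)))⟦(1 : ℤ)⟧),
      (Triangle.mk (Y.map (homOfLE (by omega : i ≤ i + 1)).op) gY hY ∈
        distTriang (DerivedCategory (ModuleCat k))) →
      ∀ j : ℤ, j < n - i →
        IsZero ((DerivedCategory.homologyFunctor (ModuleCat k) (-j)).obj G))
    (hQcoconn : ∀ i j : ℤ, n - 1 - i < j →
      IsZero ((DerivedCategory.homologyFunctor (ModuleCat k) (-j)).obj (Q.obj (op i)))) :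
    ∀ (i : ℤ) (G G' : DerivedCategory (ModuleCat k))
      (gY : Y.obj (op i) ⟶ G) (hY : G ⟶ (Y.obj (op (i + 1)))⟦(1 : ℤ)⟧)
      (gX : X.obj (op i) ⟶ G') (hX : G' ⟶ (X.obj (op (i + 1)))⟦(1 : ℤ)⟧),
      (Triangle.mk (Y.map (homOfLE (by omega : i ≤ i + 1)).op) gY hY ∈
        distTriang (DerivedCategory (ModuleCat k))) →
      (Triangle.mk (X.map (homOfLE (by omega : i ≤ i + 1)).op) gX hX ∈
        distTriang (DerivedCategory (ModuleCat k))) →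
      (∀ j : ℤ, j < n - i →
        IsZero ((DerivedCategory.homologyFunctor (ModuleCat k) (-j)).obj G)) ∧
      ∃ e : G ⟶ G',
        gY ≫ e = f.app (op i) ≫ gX ∧
        e ≫ hX = hY ≫ (shiftFunctor (DerivedCategory (ModuleCat k)) (1 : ℤ)).map
          (f.app (op (i + 1))) ∧
        ∀ j : ℤ, n - i ≤ j →
          IsIso ((DerivedCategory.homologyFunctor (ModuleCat k) (-j)).map e) := by
  intro i G G' gY hY gX hX hTY hTX
  refine ⟨fun j hj => hYconn i G gY hY hTY j hj, ?_⟩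
  set TY : Triangle (DerivedCategory (ModuleCat k)) :=
    Triangle.mk (Y.map (homOfLE (by omega : i ≤ i + 1)).op) gY hY with hTYdef
  set TX : Triangle (DerivedCategory (ModuleCat k)) :=
    Triangle.mk (X.map (homOfLE (by omega : i ≤ i + 1)).op) gX hX with hTXdef
  obtain ⟨c, hc₁, hc₂⟩ := Pretriangulated.complete_distinguished_triangle_morphism TY TX hTY hTX
    (f.app (op (i + 1))) (f.app (op i)) (f.naturality _)
  refine ⟨c, hc₁, hc₂.symm, ?_⟩
  intro j hj
  obtain ⟨hQmapi, hTQi⟩ := htri i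
  obtain ⟨hQmapi1, hTQi1⟩ := htri (i + 1)
  set F : ℤ → (DerivedCategory (ModuleCat k) ⥤ ModuleCat k) :=
    DerivedCategory.homologyFunctor (ModuleCat k) with hF
  -- vertical maps properties
  have v1epi : Epi ((F (-j)).map (f.app (op (i + 1)))) :=
    Stmt11Aux.epi_aux _ hTQi1 (-j) (hQcoconn (i + 1) j (by omega))
  have v2mono : Mono ((F (-j)).map (f.app (op i))) :=
    Stmt11Aux.mono_aux _ hTQi (-j)
      (Stmt11Aux.isZero_congr (by omega) (hQcoconn i (j + 1) (by omega)))
  have v2epi : Epi ((F (-j)).map (f.app (op i))) :=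
    Stmt11Aux.epi_aux _ hTQi (-j) (hQcoconn i j (by omega))
  have v4mono : Mono ((F (-j + 1)).map (f.app (op (i + 1)))) :=
    Stmt11Aux.mono_aux _ hTQi1 (-j + 1)
      (Stmt11Aux.isZero_congr (by omega) (hQcoconn (i + 1) j (by omega)))
  have v4epi : Epi ((F (-j + 1)).map (f.app (op (i + 1)))) :=
    Stmt11Aux.epi_aux _ hTQi1 (-j + 1)
      (Stmt11Aux.isZero_congr (by omega) (hQcoconn (i + 1) (j - 1) (by omega)))
  have v5mono : Mono ((F (-j + 1)).map (f.app (op i))) :=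
    Stmt11Aux.mono_aux _ hTQi (-j + 1)
      (Stmt11Aux.isZero_congr (by omega) (hQcoconn i j (by omega)))
  -- triangle morphism
  let φ : TY ⟶ TX :=
    { hom₁ := f.app (op (i + 1))
      hom₂ := f.app (op i)
      hom₃ := c
      comm₁ := f.naturality _
      comm₂ := hc₁
      comm₃ := hc₂ }
  -- notation for the two long exact sequences
  set u1 := (F (-j)).map TY.mor₁
  set u2 := (F (-j)).map TY.mor₂
  set u3 := DerivedCategory.HomologySequence.δ TY (-j) (-j + 1) rfl
  set u4 := (F (-j + 1)).map TY.mor₁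
  set w1 := (F (-j)).map TX.mor₁
  set w2 := (F (-j)).map TX.mor₂
  set w3 := DerivedCategory.HomologySequence.δ TX (-j) (-j + 1) rfl
  set w4 := (F (-j + 1)).map TX.mor₁
  set v1 := (F (-j)).map (f.app (op (i + 1)))
  set v2 := (F (-j)).map (f.app (op i))
  set v3 := (F (-j)).map c
  set v4 := (F (-j + 1)).map (f.app (op (i + 1)))
  set v5 := (F (-j + 1)).map (f.app (op i))
  -- exactness, elementwise
  have exY2 := (ShortComplex.moduleCat_exact_iff _).1
    (DerivedCategory.HomologySequence.exact₂ TY hTY (-j))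
  have exY3 := (ShortComplex.moduleCat_exact_iff _).1
    (DerivedCategory.HomologySequence.exact₃ TY hTY (-j) (-j + 1) rfl)
  have exY4 := (ShortComplex.moduleCat_exact_iff _).1
    (DerivedCategory.HomologySequence.exact₁ TY hTY (-j) (-j + 1) rfl)
  have exX2 := (ShortComplex.moduleCat_exact_iff _).1
    (DerivedCategory.HomologySequence.exact₂ TX hTX (-j))
  have exX3 := (ShortComplex.moduleCat_exact_iff _).1
    (DerivedCategory.HomologySequence.exact₃ TX hTX (-j) (-j + 1) rfl)
  -- complexes, elementwise
  have cplxY12 : ∀ x, u2 (u1 x) = 0 := by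
    intro x
    have : u1 ≫ u2 = 0 := by
      rw [← Functor.map_comp, comp_distTriang_mor_zero₁₂ _ hTY, Functor.map_zero]
    exact (by simpa using ConcreteCategory.congr_hom this x)
  have cplxX34 : ∀ x, w4 (w3 x) = 0 := by
    intro x
    have : w3 ≫ w4 = 0 := DerivedCategory.HomologySequence.δ_comp TX hTX (-j) (-j + 1) rfl
    exact (by simpa using ConcreteCategory.congr_hom this x)
  -- commutative squares, elementwise
  have sq1 : ∀ x, v2 (u1 x) = w1 (v1 x) := by
    intro x
    have : u1 ≫ v2 = v1 ≫ w1 := by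
      exact ((F (-j)).map_comp _ _).symm.trans
        ((congrArg (F (-j)).map φ.comm₁).trans ((F (-j)).map_comp _ _))
    exact (ConcreteCategory.congr_hom this x)
  have sq2 : ∀ x, v3 (u2 x) = w2 (v2 x) := by
    intro x
    have : u2 ≫ v3 = v2 ≫ w2 := by
      exact ((F (-j)).map_comp _ _).symm.trans
        ((congrArg (F (-j)).map φ.comm₂).trans ((F (-j)).map_comp _ _))
    exact (ConcreteCategory.congr_hom this x)
  have sq3 : ∀ x, v4 (u3 x) = w3 (v3 x) := by
    intro x
    have : v3 ≫ w3 = u3 ≫ v4 := Stmt11Aux.δ_natural φ (-j) (-j + 1) rfl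
    exact (ConcreteCategory.congr_hom this.symm x)
  have sq4 : ∀ x, v5 (u4 x) = w4 (v4 x) := by
    intro x
    have : u4 ≫ v5 = v4 ≫ w4 := by
      exact ((F (-j + 1)).map_comp _ _).symm.trans
        ((congrArg (F (-j + 1)).map φ.comm₁).trans ((F (-j + 1)).map_comp _ _))
    exact (ConcreteCategory.congr_hom this x)
  -- injectivity/surjectivity of verticals
  rw [ModuleCat.epi_iff_surjective] at v1epi v2epi v4epi
  rw [ModuleCat.mono_iff_injective] at v2mono v4mono v5mono
  -- five lemma chase
  have inj : Function.Injective v3 := by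
    intro x x' hxx'
    suffices h : ∀ y, v3 y = 0 → y = 0 by
      have := h (x - x') (by rw [map_sub, hxx', sub_self])
      rwa [sub_eq_zero] at this
    intro y hy
    have h1 : u3 y = 0 := by
      apply v4mono
      rw [sq3, hy, map_zero]
      exact (map_zero _).symm
    obtain ⟨a, ha⟩ := exY3 y h1
    have h2 : w2 (v2 a) = 0 := by rw [← sq2, ha, hy]
    obtain ⟨b, hb⟩ := exX2 (v2 a) h2
    obtain ⟨t, ht⟩ := v1epi b
    have h3 : u1 t = a := by
      apply v2mono
      exact (sq1 t).trans (by rw [ht, hb])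
    rw [← ha, ← h3]
    exact cplxY12 t
  have surj : Function.Surjective v3 := by
    intro x'
    obtain ⟨s, hs⟩ := v4epi (w3 x')
    have h1 : u4 s = 0 := by
      apply v5mono
      exact (sq4 s).trans (by rw [hs, cplxX34]; exact (map_zero _).symm)
    obtain ⟨x, hx⟩ := exY4 s h1
    have h2 : w3 (x' - v3 x) = 0 := by
      rw [map_sub, ← sq3, hx, hs, sub_self]
    obtain ⟨y', hy'⟩ := exX3 (x' - v3 x) h2
    obtain ⟨y, hy⟩ := v2epi y'
    refine ⟨x + u2 y, ?_⟩
    rw [map_add]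
    refine (congrArg (v3 x + ·) (sq2 y)).trans ?_
    rw [hy, hy']
    abel
  have : Mono v3 := (ModuleCat.mono_iff_injective _).2 inj
  have : Epi v3 := (ModuleCat.epi_iff_surjective _).2 surj
  exact isIso_of_mono_of_epi v3
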